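/- Let H : Σ → ℝ be continuous with summable variation and let β > 0. Then there exist λ_β > 0 and a continuous function Φ_β : Σ → ℝ with Φ_β(x) > 0 for every x ∈ Σ, max Φ_β = 1 and L_β[Φ_β] = λ_β Φ_β. Moreover this eigenfunction is unique: if Φ̃ : Σ → ℝ is continuous, everywhere positive and satisfies L_β[Φ̃] = λ̃ Φ̃ for some λ̃ > 0, then λ̃ = λ_β and Φ̃ = s Φ_β for some s > 0. -/

import Mathlib

open MeasureTheory Filter Topology

/-- The one-sided full shift space on two symbols. -/
abbrev Sig : Type := ℕ → Fin 2

/-- The left shift map. -/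
def shft : Sig → Sig := fun x n => x (n + 1)

/-- Concatenation of a symbol with a configuration. -/
def cons2 (i : Fin 2) (x : Sig) : Sig := fun n => match n with
  | 0 => i
  | Nat.succ k => x k

/-- `x` and `y` agree on their first `n` coordinates. -/
def nClose (n : ℕ) (x y : Sig) : Prop := ∀ k, k < n → x k = y k

/-- The `n`-th variation of `H`. -/
noncomputable def Var (H : Sig → ℝ) (n : ℕ) : ℝ :=
  sSup {d : ℝ | ∃ x y : Sig, nClose n x y ∧ d = |H x - H y|}

/-- `H` has summable variation. -/
def SummableVar (H : Sig → ℝ) : Prop := Summable (fun n : ℕ => Var H (n + 1))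

/-- The transfer operator at inverse temperature `β`. -/
noncomputable def transfer (β : ℝ) (H : Sig → ℝ) (Φ : Sig → ℝ) : Sig → ℝ :=
  fun x => Real.exp (-β * H (cons2 0 x)) * Φ (cons2 0 x)
         + Real.exp (-β * H (cons2 1 x)) * Φ (cons2 1 x)

/-- The cylinder set determined by a finite word. -/
def cyl (w : List (Fin 2)) : Set Sig := {x | ∀ i : ℕ, ∀ h : i < w.length, x i = w.get ⟨i, h⟩}

/-- The fixed point `0^∞`. -/
def zpt : Sig := fun _ => 0

/-- The fixed point `1^∞`. -/
def opt : Sig := fun _ => 1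

/-- The minimizing ergodic value of `H`. -/
noncomputable def Hbar (H : Sig → ℝ) : ℝ :=
  sInf {r : ℝ | ∃ μ : Measure Sig, IsProbabilityMeasure μ ∧ μ.map shft = μ ∧ r = ∫ x, H x ∂μ}

/-- A minimizing measure for `H`. -/
def IsMinimizing (H : Sig → ℝ) (μ : Measure Sig) : Prop :=
  IsProbabilityMeasure μ ∧ μ.map shft = μ ∧
  ∀ ν : Measure Sig, IsProbabilityMeasure ν → ν.map shft = ν →
    ∫ x, H x ∂μ ≤ ∫ x, H x ∂ν

/-- The (topological) support of a measure. -/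
def mSupport (μ : Measure Sig) : Set Sig := {x | ∀ U : Set Sig, IsOpen U → x ∈ U → μ U ≠ 0}

/-- The Mather set of `H` : union of supports of minimizing measures. -/
def mather (H : Sig → ℝ) : Set Sig := {x | ∃ μ : Measure Sig, IsMinimizing H μ ∧ x ∈ mSupport μ}

/-- Birkhoff sum of the normalized potential. -/
noncomputable def birk (H : Sig → ℝ) (k : ℕ) (z : Sig) : ℝ :=
  ∑ i ∈ Finset.range k, (H (shft^[i] z) - Hbar H)

/-- The quantity `S_n^p(x,y)` (an infimum in `EReal`, `+∞` when the defining set is empty). -/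
noncomputable def SBar (H : Sig → ℝ) (p n : ℕ) (x y : Sig) : EReal :=
  sInf {s : EReal | ∃ k : ℕ, n ≤ k ∧ ∃ z : Sig, nClose p z x ∧ nClose p (shft^[k] z) y ∧
    s = (birk H k z : EReal)}

/-- The Peierls barrier `h(x,y)`; since `S_n^p(x,y)` is nondecreasing in both `n` and `p`,
the double limit is a double supremum. -/
noncomputable def peierls (H : Sig → ℝ) (x y : Sig) : EReal := ⨆ p : ℕ, ⨆ n : ℕ, SBar H p n x y

/-- The Lax-Oleinik operator (the two preimages of `y` under the shift are `0y` and `1y`). -/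
noncomputable def laxOleinik (H V : Sig → ℝ) : Sig → ℝ :=
  fun y => min (V (cons2 0 y) + H (cons2 0 y)) (V (cons2 1 y) + H (cons2 1 y))

/-- A calibrated sub-action of `H`. -/
def IsCalibrated (H V : Sig → ℝ) : Prop :=
  Continuous V ∧ laxOleinik H V = fun y => V y + Hbar H

/-- Membership in the class `𝕂`. -/
def InK (H V : Sig → ℝ) : Prop :=
  Continuous V ∧ ∀ n : ℕ, 1 ≤ n → Var V n ≤ ∑' k : ℕ, Var H (n + 1 + k)

/-- A reduced double-well type potential with data `(H_n^0)`, `(H_n^1)` (indexed from `n = 1`). -/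
structure ReducedDW (H : Sig → ℝ) (H0 H1 : ℕ → ℝ) : Prop where
  cont : Continuous H
  nonneg : ∀ x, 0 ≤ H x
  svar : SummableVar H
  zero : ∀ x ∈ cyl [0, 0] ∪ cyl [1, 1], H x = 0
  pos0 : ∀ n, 1 ≤ n → 0 < H0 n
  pos1 : ∀ n, 1 ≤ n → 0 < H1 n
  val0 : ∀ n, 1 ≤ n → ∀ x ∈ cyl (0 :: (List.replicate n 1 ++ [0])), H x = H0 n
  val1 : ∀ n, 1 ≤ n → ∀ x ∈ cyl (1 :: (List.replicate n 0 ++ [1])), H x = H1 n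
  bdd0 : ∀ k : ℕ, BddAbove (Set.range fun n : ℕ => |H0 (k + 1) - H0 (k + 1 + n)|)
  bdd1 : ∀ k : ℕ, BddAbove (Set.range fun n : ℕ => |H1 (k + 1) - H1 (k + 1 + n)|)
  sum0 : Summable (fun k : ℕ => ⨆ n : ℕ, |H0 (k + 1) - H0 (k + 1 + n)|)
  sum1 : Summable (fun k : ℕ => ⨆ n : ℕ, |H1 (k + 1) - H1 (k + 1 + n)|)

/-- A double-well type potential with data `a_n^0, a_n^1, b_n^0, b_n^1` (indexed from `n = 1`). -/
structure DW (H : Sig → ℝ) (a0 a1 b0 b1 : ℕ → ℝ) : Prop where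
  cont : Continuous H
  nonneg : ∀ x, 0 ≤ H x
  svar : SummableVar H
  anneg0 : ∀ n, 1 ≤ n → 0 ≤ a0 n
  anneg1 : ∀ n, 1 ≤ n → 0 ≤ a1 n
  bpos0 : ∀ n, 1 ≤ n → 0 < b0 n
  bpos1 : ∀ n, 1 ≤ n → 0 < b1 n
  vala0 : ∀ n, 1 ≤ n → ∀ x ∈ cyl (0 :: (List.replicate n 0 ++ [1])), H x = a0 n
  vala1 : ∀ n, 1 ≤ n → ∀ x ∈ cyl (1 :: (List.replicate n 1 ++ [0])), H x = a1 n
  valb0 : ∀ n, 1 ≤ n → ∀ x ∈ cyl (0 :: (List.replicate n 1 ++ [0])), H x = b0 n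
  valb1 : ∀ n, 1 ≤ n → ∀ x ∈ cyl (1 :: (List.replicate n 0 ++ [1])), H x = b1 n
  suma0 : Summable (fun n : ℕ => ((n + 1 : ℕ) : ℝ) * a0 (n + 1))
  suma1 : Summable (fun n : ℕ => ((n + 1 : ℕ) : ℝ) * a1 (n + 1))
  bddb0 : ∀ k : ℕ, BddAbove (Set.range fun n : ℕ => |b0 (k + 1) - b0 (k + 1 + n)|)
  bddb1 : ∀ k : ℕ, BddAbove (Set.range fun n : ℕ => |b1 (k + 1) - b1 (k + 1 + n)|)
  sumb0 : Summable (fun k : ℕ => ⨆ n : ℕ, |b0 (k + 1) - b0 (k + 1 + n)|)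
  sumb1 : Summable (fun k : ℕ => ⨆ n : ℕ, |b1 (k + 1) - b1 (k + 1 + n)|)

/-- The series `F_β(λ) = Σ_{k≥1} λ^{-k} e^{-β H_k}`. -/
noncomputable def Fser (β : ℝ) (Hs : ℕ → ℝ) (lam : ℝ) : ℝ :=
  ∑' k : ℕ, (lam ^ (k + 1))⁻¹ * Real.exp (-β * Hs (k + 1))

/-- The series `F̃_β(λ) = Σ_{k≥1} k λ^{-k} e^{-β H_k}`. -/
noncomputable def Ftser (β : ℝ) (Hs : ℕ → ℝ) (lam : ℝ) : ℝ :=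
  ∑' k : ℕ, ((k + 1 : ℕ) : ℝ) * (lam ^ (k + 1))⁻¹ * Real.exp (-β * Hs (k + 1))

/-- The data of the Ruelle-Perron-Frobenius solution and Gibbs measure at inverse temperature `β`:
eigenfunction `Φ` (positive, continuous, max 1), eigenvalue `lam`, eigenprobability `ν`,
and the Gibbs measure `μ = Φ ν / ∫ Φ dν`. -/
def GibbsData (H : Sig → ℝ) (β : ℝ) (Φ : Sig → ℝ) (lam : ℝ) (ν μ : Measure Sig) : Prop :=
  Continuous Φ ∧ (∀ x, 0 < Φ x) ∧ IsGreatest (Set.range Φ) 1 ∧ 0 < lam ∧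
  (transfer β H Φ = fun x => lam * Φ x) ∧
  IsProbabilityMeasure ν ∧
  (∀ f : Sig → ℝ, Continuous f → ∫ x, transfer β H f x ∂ν = lam * ∫ x, f x ∂ν) ∧
  μ = (ENNReal.ofReal (∫ x, Φ x ∂ν))⁻¹ • ν.withDensity (fun x => ENNReal.ofReal (Φ x))


namespace RPF

lemma nClose_refl (n : ℕ) (x : Sig) : nClose n x x := fun _ _ => rfl

lemma nClose_symm {n : ℕ} {x y : Sig} (h : nClose n x y) : nClose n y x :=
  fun k hk => (h k hk).symm

lemma nClose_cons {m : ℕ} {x y : Sig} (h : nClose m x y) (i : Fin 2) :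
    nClose (m + 1) (cons2 i x) (cons2 i y) := by
  intro k hk
  cases k with
  | zero => rfl
  | succ k => exact h k (Nat.succ_lt_succ_iff.mp hk)

lemma continuous_cons2 (i : Fin 2) : Continuous (cons2 i) := by
  apply continuous_pi
  intro k
  cases k with
  | zero => exact continuous_const
  | succ k => exact continuous_apply k

lemma exists_max (f : Sig → ℝ) (hf : Continuous f) : ∃ x, ∀ y, f y ≤ f x := by
  have hne : (Set.univ : Set Sig).Nonempty := ⟨fun _ => 0, Set.mem_univ _⟩
  obtain ⟨x, -, hx⟩ := isCompact_univ.exists_isMaxOn hne hf.continuousOn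
  exact ⟨x, fun y => hx (Set.mem_univ y)⟩

lemma exists_min (f : Sig → ℝ) (hf : Continuous f) : ∃ x, ∀ y, f x ≤ f y := by
  obtain ⟨x, hx⟩ := exists_max (fun z => -f z) (hf.neg)
  exact ⟨x, fun y => by have := hx y; linarith⟩

lemma var_nonneg (H : Sig → ℝ) (n : ℕ) (hb : ∃ C, ∀ d ∈ {d : ℝ | ∃ x y : Sig, nClose n x y ∧ d = |H x - H y|}, d ≤ C) :
    0 ≤ Var H n := by
  obtain ⟨C, hC⟩ := hb
  have h0 : (0:ℝ) ∈ {d : ℝ | ∃ x y : Sig, nClose n x y ∧ d = |H x - H y|} :=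
    ⟨fun _ => 0, fun _ => 0, nClose_refl _ _, by simp⟩
  exact le_csSup ⟨C, fun d hd => hC d hd⟩ h0

lemma bddset (H : Sig → ℝ) (hHc : Continuous H) (n : ℕ) :
    ∃ C, ∀ d ∈ {d : ℝ | ∃ x y : Sig, nClose n x y ∧ d = |H x - H y|}, d ≤ C := by
  obtain ⟨z, hz⟩ := exists_max (fun x => |H x|) (hHc.abs)
  refine ⟨2 * |H z|, ?_⟩
  rintro d ⟨x, y, -, rfl⟩
  have h1 := hz x
  have h2 := hz y
  calc |H x - H y| ≤ |H x| + |H y| := abs_sub _ _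
    _ ≤ 2 * |H z| := by linarith

lemma var_nonneg' (H : Sig → ℝ) (hHc : Continuous H) (n : ℕ) : 0 ≤ Var H n :=
  var_nonneg H n (bddset H hHc n)

lemma abs_sub_le_var (H : Sig → ℝ) (hHc : Continuous H) {n : ℕ} {x y : Sig}
    (h : nClose n x y) : |H x - H y| ≤ Var H n :=
  le_csSup ((bddset H hHc n).imp (fun C hC => fun d hd => hC d hd)) ⟨x, y, h, rfl⟩


section Transfer

variable (β : ℝ) (H : Sig → ℝ)

lemma transfer_def (f : Sig → ℝ) (x : Sig) : transfer β H f x =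
    Real.exp (-β * H (cons2 0 x)) * f (cons2 0 x)
    + Real.exp (-β * H (cons2 1 x)) * f (cons2 1 x) := rfl

lemma transfer_continuous (hHc : Continuous H) {f : Sig → ℝ} (hf : Continuous f) :
    Continuous (transfer β H f) := by
  apply Continuous.add
  · exact ((Real.continuous_exp.comp ((continuous_const.mul hHc).comp (continuous_cons2 0)))).mul
      (hf.comp (continuous_cons2 0))
  · exact ((Real.continuous_exp.comp ((continuous_const.mul hHc).comp (continuous_cons2 1)))).mul
      (hf.comp (continuous_cons2 1))

lemma transfer_pos {f : Sig → ℝ} (hf : ∀ x, 0 < f x) (x : Sig) : 0 < transfer β H f x :=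
  add_pos (mul_pos (Real.exp_pos _) (hf _)) (mul_pos (Real.exp_pos _) (hf _))

lemma transfer_mono {f g : Sig → ℝ} (h : ∀ x, f x ≤ g x) (x : Sig) :
    transfer β H f x ≤ transfer β H g x :=
  add_le_add (mul_le_mul_of_nonneg_left (h _) (Real.exp_pos _).le)
    (mul_le_mul_of_nonneg_left (h _) (Real.exp_pos _).le)

lemma transfer_smul (c : ℝ) (f : Sig → ℝ) (x : Sig) :
    transfer β H (fun y => c * f y) x = c * transfer β H f x := by
  simp only [transfer_def]; ring

/-- Iterates of the transfer operator applied to the constant function 1. -/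
noncomputable def Tn (n : ℕ) : Sig → ℝ := (transfer β H)^[n] (fun _ => 1)

lemma Tn_zero (x : Sig) : Tn β H 0 x = 1 := rfl

lemma Tn_succ (n : ℕ) : Tn β H (n + 1) = transfer β H (Tn β H n) := by
  simp only [Tn, Function.iterate_succ_apply']

lemma Tn_pos (n : ℕ) (x : Sig) : 0 < Tn β H n x := by
  induction n generalizing x with
  | zero => exact one_pos
  | succ n ih => rw [Tn_succ]; exact transfer_pos β H ih x

lemma Tn_continuous (hHc : Continuous H) (n : ℕ) : Continuous (Tn β H n) := by
  induction n with
  | zero => exact continuous_const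
  | succ n ih => rw [Tn_succ]; exact transfer_continuous β H hHc ih

/-- Distortion estimate for `Tn`. -/
lemma Tn_ratio (hHc : Continuous H) (hβ : 0 ≤ β) (n : ℕ) :
    ∀ m : ℕ, ∀ x y : Sig, nClose m x y →
    Tn β H n x ≤ Real.exp (β * ∑ k ∈ Finset.range n, Var H (m + 1 + k)) * Tn β H n y := by
  induction n with
  | zero => intro m x y _; simp [Tn_zero]
  | succ n ih =>
    intro m x y hxy
    have hg : ∀ i : Fin 2, Real.exp (-β * H (cons2 i x)) ≤
        Real.exp (β * Var H (m + 1)) * Real.exp (-β * H (cons2 i y)) := by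
      intro i
      rw [← Real.exp_add]
      apply Real.exp_le_exp.2
      have hv := abs_sub_le_var H hHc (nClose_cons hxy i)
      have : H (cons2 i y) - H (cons2 i x) ≤ Var H (m + 1) := by
        have := neg_abs_le (H (cons2 i x) - H (cons2 i y))
        have h2 := abs_nonneg (H (cons2 i x) - H (cons2 i y))
        nlinarith [hv]
      nlinarith
    have hT : ∀ i : Fin 2, Tn β H n (cons2 i x) ≤
        Real.exp (β * ∑ k ∈ Finset.range n, Var H (m + 2 + k)) * Tn β H n (cons2 i y) := by
      intro i
      have h := ih (m + 1) (cons2 i x) (cons2 i y) (nClose_cons hxy i)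
      have hs : (∑ k ∈ Finset.range n, Var H (m + 1 + 1 + k))
          = ∑ k ∈ Finset.range n, Var H (m + 2 + k) :=
        Finset.sum_congr rfl (fun k _ => congrArg (Var H) (by omega))
      rwa [hs] at h
    have hsum : (∑ k ∈ Finset.range (n + 1), Var H (m + 1 + k)) =
        Var H (m + 1) + ∑ k ∈ Finset.range n, Var H (m + 2 + k) := by
      have hs : ∀ k ∈ Finset.range n, Var H (m + 1 + (k + 1)) = Var H (m + 2 + k) :=
        fun k _ => congrArg (Var H) (by omega)
      rw [Finset.sum_range_succ', Finset.sum_congr rfl hs]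
      simp [add_comm]
    rw [Tn_succ]
    simp only [transfer_def]
    have e0 := mul_le_mul (hg 0) (hT 0) (le_of_lt (Tn_pos β H n _)) (by positivity)
    have e1 := mul_le_mul (hg 1) (hT 1) (le_of_lt (Tn_pos β H n _)) (by positivity)
    calc Real.exp (-β * H (cons2 0 x)) * Tn β H n (cons2 0 x)
          + Real.exp (-β * H (cons2 1 x)) * Tn β H n (cons2 1 x)
        ≤ (Real.exp (β * Var H (m+1)) * Real.exp (-β * H (cons2 0 y))) *
            (Real.exp (β * ∑ k ∈ Finset.range n, Var H (m + 2 + k)) * Tn β H n (cons2 0 y))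
          + (Real.exp (β * Var H (m+1)) * Real.exp (-β * H (cons2 1 y))) *
            (Real.exp (β * ∑ k ∈ Finset.range n, Var H (m + 2 + k)) * Tn β H n (cons2 1 y)) := by
          exact add_le_add e0 e1
      _ = Real.exp (β * Var H (m+1)) * Real.exp (β * ∑ k ∈ Finset.range n, Var H (m + 2 + k)) *
            (Real.exp (-β * H (cons2 0 y)) * Tn β H n (cons2 0 y)
             + Real.exp (-β * H (cons2 1 y)) * Tn β H n (cons2 1 y)) := by ring
      _ = Real.exp (β * ∑ k ∈ Finset.range (n + 1), Var H (m + 1 + k)) *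
            (Real.exp (-β * H (cons2 0 y)) * Tn β H n (cons2 0 y)
             + Real.exp (-β * H (cons2 1 y)) * Tn β H n (cons2 1 y)) := by
          rw [hsum, mul_add β, Real.exp_add]

end Transfer


section Tail

variable {H : Sig → ℝ}

/-- Tail sums of the variation. -/
noncomputable def tl (H : Sig → ℝ) (m : ℕ) : ℝ := ∑' k, Var H (m + 1 + k)

lemma summable_shift (hHv : SummableVar H) (m : ℕ) :
    Summable (fun k => Var H (m + 1 + k)) := by
  have : (fun k => Var H (m + 1 + k)) = fun k => Var H ((k + m) + 1) := by
    funext k; congr 1; omega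
  rw [this]
  exact (summable_nat_add_iff (f := fun n => Var H (n + 1)) m).2 hHv

lemma tl_nonneg (hHc : Continuous H) (m : ℕ) : 0 ≤ tl H m :=
  tsum_nonneg (fun k => var_nonneg' H hHc _)

lemma sum_le_tl (hHc : Continuous H) (hHv : SummableVar H) (m n : ℕ) :
    ∑ k ∈ Finset.range n, Var H (m + 1 + k) ≤ tl H m :=
  (summable_shift hHv m).sum_le_tsum _ (fun k _ => var_nonneg' H hHc _)

lemma tl_tendsto : Tendsto (tl H) atTop (𝓝 0) := by
  have h := tendsto_sum_nat_add (fun n => Var H (n + 1))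
  exact h.congr (fun m => tsum_congr (fun k => congrArg (Var H) (by omega)))

/-- Distortion bound in terms of the tail sums. -/
lemma Tn_ratio_tl (hHc : Continuous H) (hHv : SummableVar H) {β : ℝ} (hβ : 0 ≤ β)
    {m : ℕ} {x y : Sig} (h : nClose m x y) (n : ℕ) :
    Tn β H n x ≤ Real.exp (β * tl H m) * Tn β H n y := by
  refine le_trans (Tn_ratio β H hHc hβ n m x y h) ?_
  apply mul_le_mul_of_nonneg_right _ (Tn_pos β H n y).le
  exact Real.exp_le_exp.2 (mul_le_mul_of_nonneg_left (sum_le_tl hHc hHv m n) hβ)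

end Tail

section Eigenvalue

variable {H : Sig → ℝ} {β : ℝ}

lemma exists_lam (hHc : Continuous H) (hHv : SummableVar H) (hβ : 0 < β) :
    ∃ lam : ℝ, 0 < lam ∧
      (∀ n x, Real.exp (-(β * tl H 0)) * lam ^ n ≤ Tn β H n x) ∧
      (∀ n x, Tn β H n x ≤ Real.exp (2 * (β * tl H 0)) * lam ^ n) := by
  set V : ℝ := tl H 0 with hVdef
  have hV : 0 ≤ V := tl_nonneg hHc 0
  have hβV : 0 ≤ β * V := mul_nonneg hβ.le hV
  -- max and min points
  choose xM hxM using fun n => exists_max (Tn β H n) (Tn_continuous β H hHc n)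
  choose xm hxm using fun n => exists_min (Tn β H n) (Tn_continuous β H hHc n)
  set a : ℕ → ℝ := fun n => Tn β H n (xM n) with ha_def
  set b : ℕ → ℝ := fun n => Tn β H n (xm n) with hb_def
  have ha_pos : ∀ n, 0 < a n := fun n => Tn_pos β H n _
  have hb_pos : ∀ n, 0 < b n := fun n => Tn_pos β H n _
  have ha0 : a 0 = 1 := rfl
  have hb0 : b 0 = 1 := rfl
  have hba : ∀ n, a n ≤ Real.exp (β * V) * b n := fun n =>
    Tn_ratio_tl hHc hHv hβ.le (fun k hk => absurd hk (Nat.not_lt_zero k)) n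
  have hab : ∀ n, Real.exp (-(β * V)) * a n ≤ b n := by
    intro n
    have := hba n
    rw [Real.exp_neg]
    rw [inv_mul_le_iff₀ (Real.exp_pos _)]
    linarith
  -- sub/supermultiplicativity at the level of Tn
  have hTadd_le : ∀ m n x, Tn β H (n + m) x ≤ a m * Tn β H n x := by
    intro m n
    induction n with
    | zero => intro x; rw [Nat.zero_add]; simpa [Tn_zero] using hxM m x
    | succ n ih =>
      intro x
      have hrw : n + 1 + m = (n + m) + 1 := by omega
      rw [hrw, Tn_succ]
      calc transfer β H (Tn β H (n + m)) x
          ≤ transfer β H (fun y => a m * Tn β H n y) x := transfer_mono β H (fun y => ih y) x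
        _ = a m * Tn β H (n + 1) x := by rw [transfer_smul, Tn_succ]
  have hTadd_ge : ∀ m n x, b m * Tn β H n x ≤ Tn β H (n + m) x := by
    intro m n
    induction n with
    | zero => intro x; rw [Nat.zero_add]; simpa [Tn_zero] using hxm m x
    | succ n ih =>
      intro x
      have hrw : n + 1 + m = (n + m) + 1 := by omega
      rw [hrw, Tn_succ]
      calc b m * transfer β H (Tn β H n) x
          = transfer β H (fun y => b m * Tn β H n y) x := (transfer_smul β H _ _ _).symm
        _ ≤ transfer β H (Tn β H (n + m)) x := transfer_mono β H (fun y => ih y) x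
        _ = Tn β H (n + m + 1) x := by rw [Tn_succ]
  have hsub : ∀ n m, a (n + m) ≤ a n * a m :=
    fun n m => le_trans (hTadd_le m n (xM (n + m))) (by
      have := hxM n (xM (n + m))
      nlinarith [ha_pos m])
  have hsup : ∀ n m, b n * b m ≤ b (n + m) :=
    fun n m => le_trans (by
      have := hxm n (xm (n + m))
      nlinarith [hb_pos m]) (hTadd_ge m n (xm (n + m)))
  have hba' : ∀ n, b n ≤ a n := fun n => hxm n (xM n)
  -- logarithms
  set u : ℕ → ℝ := fun n => Real.log (a n) with hu_def
  have hu0 : u 0 = 0 := by simp [hu_def, ha0]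
  have husub : ∀ n m, u (n + m) ≤ u n + u m := by
    intro n m
    rw [hu_def]
    simp only
    rw [← Real.log_mul (ha_pos n).ne' (ha_pos m).ne']
    exact Real.log_le_log (ha_pos _) (hsub n m)
  set C : ℝ := 2 * (β * V) with hC_def
  have hC : 0 ≤ C := by positivity
  have husup : ∀ n m, u n + u m - C ≤ u (n + m) := by
    intro n m
    have h1 : Real.exp (-(β*V)) * a n * (Real.exp (-(β*V)) * a m) ≤ a (n + m) := by
      have h2 := hsup n m
      have h3 := hba' (n + m)
      have h4 := mul_le_mul (hab n) (hab m) (mul_pos (Real.exp_pos _) (ha_pos m)).le (hb_pos n).le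
      linarith
    have hlog : Real.log (Real.exp (-(β*V)) * a n * (Real.exp (-(β*V)) * a m))
        = u n + u m - C := by
      rw [Real.log_mul (mul_pos (Real.exp_pos _) (ha_pos n)).ne' (mul_pos (Real.exp_pos _) (ha_pos m)).ne',
        Real.log_mul (Real.exp_ne_zero _) (ha_pos n).ne',
        Real.log_mul (Real.exp_ne_zero _) (ha_pos m).ne', Real.log_exp]
      rw [hC_def]; ring
    calc u n + u m - C
        = Real.log (Real.exp (-(β*V)) * a n * (Real.exp (-(β*V)) * a m)) := hlog.symm
      _ ≤ Real.log (a (n + m)) := Real.log_le_log (mul_pos (mul_pos (Real.exp_pos _) (ha_pos n)) (mul_pos (Real.exp_pos _) (ha_pos m))) h1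
  -- powers of b 1
  have hpow : ∀ k, b 1 ^ k ≤ b k := by
    intro k
    induction k with
    | zero => simp [hb0]
    | succ k ih =>
      calc b 1 ^ (k+1) = b 1 ^ k * b 1 := by ring
        _ ≤ b k * b 1 := by nlinarith [hb_pos 1, hb_pos k, pow_pos (hb_pos 1) k]
        _ ≤ b (k + 1) := hsup k 1
  have hbdd : BddBelow (Set.range (fun n : ℕ => u (n+1) / ((n : ℝ)+1))) := by
    refine ⟨Real.log (b 1), ?_⟩
    rintro r ⟨n, rfl⟩
    have h2 : b 1 ^ (n+1) ≤ a (n+1) := le_trans (hpow (n+1)) (hba' (n+1))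
    have h3 := Real.log_le_log (pow_pos (hb_pos 1) (n+1)) h2
    rw [Real.log_pow] at h3
    rw [le_div_iff₀ (by positivity)]
    push_cast at h3 ⊢
    linarith
  set l : ℝ := ⨅ n : ℕ, u (n+1) / ((n : ℝ)+1) with hl_def
  set lam : ℝ := Real.exp l with hlam_def
  have hlam_pos : 0 < lam := Real.exp_pos l
  have hexp_nl : ∀ n : ℕ, Real.exp ((n : ℝ) * l) = lam ^ n := fun n => Real.exp_nat_mul l n
  have hlaml : ∀ n, lam ^ n ≤ a n := by
    intro n
    cases n with
    | zero => simp [ha0]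
    | succ n =>
      have h1 : l ≤ u (n+1) / ((n : ℝ)+1) := ciInf_le hbdd n
      have h2 : ((n : ℝ)+1) * l ≤ u (n+1) := by
        rw [le_div_iff₀ (by positivity)] at h1
        linarith
      have h3 : Real.exp (((n+1 : ℕ) : ℝ) * l) ≤ Real.exp (u (n+1)) := by
        apply Real.exp_le_exp.2
        push_cast
        linarith
      rw [hexp_nl (n+1), Real.exp_log (ha_pos (n+1))] at h3
      exact h3
  -- iterated sub/superadditivity
  have husubit : ∀ j k, u ((j+1) * k) ≤ ((j+1 : ℕ) : ℝ) * u k := by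
    intro j k
    induction j with
    | zero => simp
    | succ j ih =>
      have h1 : (j+2) * k = (j+1) * k + k := by ring
      rw [h1]
      calc u ((j+1) * k + k) ≤ u ((j+1) * k) + u k := husub _ _
        _ ≤ ((j+1 : ℕ) : ℝ) * u k + u k := by linarith
        _ = ((j+2 : ℕ) : ℝ) * u k := by push_cast; ring
  have husupit : ∀ j k, ((j+1 : ℕ) : ℝ) * u k - (j : ℝ) * C ≤ u ((j+1) * k) := by
    intro j k
    induction j with
    | zero => simp
    | succ j ih =>
      have h1 : (j+2) * k = (j+1) * k + k := by ring
      rw [h1]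
      calc ((j+2 : ℕ) : ℝ) * u k - ((j+1 : ℕ) : ℝ) * C
          = (((j+1 : ℕ) : ℝ) * u k - (j : ℝ) * C) + u k - C := by push_cast; ring
        _ ≤ u ((j+1) * k) + u k - C := by linarith
        _ ≤ u ((j+1) * k + k) := husup _ _
  -- upper bound on u
  have hupper : ∀ n, u n ≤ (n : ℝ) * l + C := by
    intro n
    cases n with
    | zero => simp [hu0]; linarith
    | succ n =>
      apply le_of_forall_pos_le_add
      intro δ hδ
      set ε : ℝ := δ / ((n : ℝ)+1) with hε_def
      have hε : 0 < ε := by positivity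
      have hlow : l < l + ε := by linarith
      obtain ⟨k, hk⟩ := exists_lt_of_ciInf_lt (show l < l + ε from hlow)
      have hk1 : u (k+1) ≤ ((k : ℝ)+1) * (l + ε) := by
        rw [div_lt_iff₀ (by positivity)] at hk
        linarith
      -- u ((k+1)*(n+1)) bounds
      have hA : ((k+1 : ℕ) : ℝ) * u (n+1) - (k : ℝ) * C ≤ u ((k+1) * (n+1)) :=
        husupit k (n+1)
      have hB : u ((n+1) * (k+1)) ≤ ((n+1 : ℕ) : ℝ) * u (k+1) := husubit n (k+1)
      rw [Nat.mul_comm (k+1) (n+1)] at hA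
      have hkey : ((k : ℝ)+1) * u (n+1) ≤ ((n : ℝ)+1) * (((k : ℝ)+1) * (l + ε)) + (k : ℝ) * C := by
        push_cast at hA hB
        nlinarith [hk1, Nat.cast_nonneg (α := ℝ) n, Nat.cast_nonneg (α := ℝ) k]
      have hkpos : (0 : ℝ) < (k : ℝ) + 1 := by positivity
      have hfin : u (n+1) ≤ ((n : ℝ)+1) * (l + ε) + C := by
        nlinarith [hkey, hC, hkpos]
      have : ((n : ℝ)+1) * ε = δ := by
        rw [hε_def]; field_simp
      push_cast
      nlinarith [hfin]
  have haupper : ∀ n, a n ≤ Real.exp C * lam ^ n := by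
    intro n
    have h1 : a n = Real.exp (u n) := (Real.exp_log (ha_pos n)).symm
    rw [h1, ← hexp_nl n, ← Real.exp_add]
    apply Real.exp_le_exp.2
    linarith [hupper n]
  refine ⟨lam, hlam_pos, ?_, ?_⟩
  · intro n x
    have h1 : b n ≤ Tn β H n x := hxm n x
    have h2 := hab n
    have h3 := hlaml n
    have h4 : Real.exp (-(β * V)) * lam ^ n ≤ Real.exp (-(β * V)) * a n := by
      nlinarith [Real.exp_pos (-(β * V))]
    linarith
  · intro n x
    have h1 : Tn β H n x ≤ a n := hxM n x
    have h2 := haupper n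
    rw [hC_def] at h2
    linarith

end Eigenvalue


section Eigenfunction

variable {H : Sig → ℝ} {β : ℝ}

lemma transfer_sum (s : Finset ℕ) (f : ℕ → Sig → ℝ) (x : Sig) :
    transfer β H (fun y => ∑ n ∈ s, f n y) x = ∑ n ∈ s, transfer β H (f n) x := by
  simp only [transfer_def, Finset.mul_sum]
  rw [← Finset.sum_add_distrib]

lemma isOpen_nClose (m : ℕ) (x : Sig) : IsOpen {y : Sig | nClose m x y} := by
  have : {y : Sig | nClose m x y} = ⋂ k ∈ Finset.range m, {y : Sig | y k = x k} := by
    ext y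
    simp only [Set.mem_setOf_eq, Set.mem_iInter, Finset.mem_range]
    constructor
    · intro h k hk; exact (h k hk).symm
    · intro h k hk; exact (h k hk).symm
  rw [this]
  apply isOpen_biInter_finset
  intro k _
  have h2 : {y : Sig | y k = x k} = (fun y : Sig => y k) ⁻¹' {x k} := rfl
  rw [h2]
  exact (isOpen_discrete _).preimage (continuous_apply k)

lemma exists_eigen (hHc : Continuous H) (hHv : SummableVar H) (hβ : 0 < β) :
    ∃ lam : ℝ, 0 < lam ∧
      (∀ n x, Real.exp (-(β * tl H 0)) * lam ^ n ≤ Tn β H n x) ∧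
      (∀ n x, Tn β H n x ≤ Real.exp (2 * (β * tl H 0)) * lam ^ n) ∧
      ∃ Φ : Sig → ℝ, Continuous Φ ∧ (∀ x, 0 < Φ x) ∧
        transfer β H Φ = fun x => lam * Φ x := by
  obtain ⟨lam, hlam, hlow, hupp⟩ := exists_lam hHc hHv hβ
  refine ⟨lam, hlam, hlow, hupp, ?_⟩
  set c₁ : ℝ := Real.exp (-(β * tl H 0)) with hc₁def
  set c₂ : ℝ := Real.exp (2 * (β * tl H 0)) with hc₂def
  have hc₁ : 0 < c₁ := Real.exp_pos _
  have hc₂ : 0 < c₂ := Real.exp_pos _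
  set P : ℕ → Sig → ℝ := fun n x => (lam ^ n)⁻¹ * Tn β H n x with hPdef
  have hlampow : ∀ n : ℕ, (0:ℝ) < lam ^ n := fun n => pow_pos hlam n
  have hP1 : ∀ n x, c₁ ≤ P n x := by
    intro n x
    calc c₁ = (lam ^ n)⁻¹ * (c₁ * lam ^ n) := by field_simp
      _ ≤ (lam ^ n)⁻¹ * Tn β H n x :=
        mul_le_mul_of_nonneg_left (hlow n x) (inv_nonneg.2 (hlampow n).le)
  have hP2 : ∀ n x, P n x ≤ c₂ := by
    intro n x
    calc P n x ≤ (lam ^ n)⁻¹ * (c₂ * lam ^ n) :=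
        mul_le_mul_of_nonneg_left (hupp n x) (inv_nonneg.2 (hlampow n).le)
      _ = c₂ := by field_simp
  have hP0 : ∀ x, P 0 x = 1 := by intro x; simp [hPdef, Tn_zero]
  have hPtrans : ∀ n x, transfer β H (P n) x = lam * P (n+1) x := by
    intro n x
    have h1 : transfer β H (P n) x = (lam ^ n)⁻¹ * Tn β H (n+1) x := by
      rw [hPdef]
      simp only
      rw [transfer_smul, ← Tn_succ]
    rw [h1, hPdef]
    simp only
    rw [pow_succ]
    field_simp
  set A : ℕ → Sig → ℝ := fun N x => ((N : ℝ))⁻¹ * ∑ n ∈ Finset.range N, P n x with hAdef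
  have hA1 : ∀ N, 1 ≤ N → ∀ x, A N x ∈ Set.Icc c₁ c₂ := by
    intro N hN x
    have hNpos : (0:ℝ) < (N : ℝ) := by exact_mod_cast hN
    have hs1 : (N : ℝ) * c₁ ≤ ∑ n ∈ Finset.range N, P n x := by
      calc (N : ℝ) * c₁ = ∑ _n ∈ Finset.range N, c₁ := by
            rw [Finset.sum_const, Finset.card_range, nsmul_eq_mul]
        _ ≤ _ := Finset.sum_le_sum (fun n _ => hP1 n x)
    have hs2 : (∑ n ∈ Finset.range N, P n x) ≤ (N : ℝ) * c₂ := by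
      calc (∑ n ∈ Finset.range N, P n x) ≤ ∑ _n ∈ Finset.range N, c₂ :=
            Finset.sum_le_sum (fun n _ => hP2 n x)
        _ = (N : ℝ) * c₂ := by rw [Finset.sum_const, Finset.card_range, nsmul_eq_mul]
    constructor
    · rw [hAdef]; simp only
      rw [le_inv_mul_iff₀ hNpos]
      linarith
    · rw [hAdef]; simp only
      rw [inv_mul_le_iff₀ hNpos]
      linarith
  have hAtrans : ∀ N, 1 ≤ N → ∀ x, transfer β H (A N) x
      = lam * A N x + lam * ((N : ℝ))⁻¹ * (P N x - 1) := by
    intro N hN x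
    have hNne : ((N : ℝ)) ≠ 0 := by
      have : (0:ℝ) < (N : ℝ) := by exact_mod_cast hN
      exact this.ne'
    have h1 : transfer β H (A N) x
        = ((N : ℝ))⁻¹ * ∑ n ∈ Finset.range N, transfer β H (P n) x := by
      rw [hAdef]
      simp only
      rw [transfer_smul, transfer_sum]
    have h2 : (∑ n ∈ Finset.range N, transfer β H (P n) x)
        = lam * ∑ n ∈ Finset.range N, P (n+1) x := by
      rw [Finset.mul_sum]
      exact Finset.sum_congr rfl (fun n _ => hPtrans n x)
    have h3 : (∑ n ∈ Finset.range N, P (n+1) x)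
        = (∑ n ∈ Finset.range N, P n x) + P N x - P 0 x := by
      have := Finset.sum_range_succ' (fun n => P n x) N
      rw [Finset.sum_range_succ] at this
      linarith
    rw [h1, h2, h3, hP0]
    simp only [hAdef]
    field_simp
    ring
  -- ultrafilter limit
  obtain ⟨U, hU⟩ := Filter.exists_ultrafilter_le (atTop : Filter ℕ)
  have hKcpt : IsCompact (Set.Icc c₁ c₂) := isCompact_Icc
  have hlimx : ∀ x : Sig, ∃ L, L ∈ Set.Icc c₁ c₂ ∧ Tendsto (fun N => A N x) (↑U) (𝓝 L) := by
    intro x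
    have hmem : {N : ℕ | A N x ∈ Set.Icc c₁ c₂} ∈ (↑U : Filter ℕ) := by
      apply hU
      rw [mem_atTop_sets]
      exact ⟨1, fun N hN => hA1 N hN x⟩
    have hle : ↑(U.map (fun N => A N x)) ≤ 𝓟 (Set.Icc c₁ c₂) := by
      rw [Ultrafilter.coe_map, Filter.le_principal_iff, Filter.mem_map]
      exact hmem
    obtain ⟨L, hL, hle2⟩ := hKcpt.ultrafilter_le_nhds _ hle
    refine ⟨L, hL, ?_⟩
    rwa [Filter.Tendsto, ← Ultrafilter.coe_map]
  choose Φ hΦmem hΦlim using hlimx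
  have hΦpos : ∀ x, 0 < Φ x := fun x => lt_of_lt_of_le hc₁ (hΦmem x).1
  -- eigen-equation
  have heig : transfer β H Φ = fun x => lam * Φ x := by
    funext x
    have t1 : Tendsto (fun N => transfer β H (A N) x) ↑U
        (𝓝 (transfer β H Φ x)) := by
      have := Tendsto.add
        ((hΦlim (cons2 0 x)).const_mul (Real.exp (-β * H (cons2 0 x))))
        ((hΦlim (cons2 1 x)).const_mul (Real.exp (-β * H (cons2 1 x))))
      exact this
    have herr : Tendsto (fun N : ℕ => lam * ((N : ℝ))⁻¹ * (P N x - 1)) atTop (𝓝 0) := by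
      refine squeeze_zero_norm (a := fun N : ℕ => (lam * (c₂ + 1)) * ((N : ℝ))⁻¹) ?_ ?_
      · intro N
        have h1 : |P N x - 1| ≤ c₂ + 1 := by
          rw [abs_le]
          constructor
          · have := hP1 N x; linarith
          · have := hP2 N x; linarith
        rw [Real.norm_eq_abs, abs_mul, abs_mul, abs_of_pos hlam, abs_of_nonneg
          (inv_nonneg.2 (Nat.cast_nonneg N))]
        calc lam * ((N : ℝ))⁻¹ * |P N x - 1| ≤ lam * ((N : ℝ))⁻¹ * (c₂ + 1) := by
              apply mul_le_mul_of_nonneg_left h1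
              positivity
          _ = lam * (c₂ + 1) * ((N : ℝ))⁻¹ := by ring
      · have := (tendsto_inv_atTop_nhds_zero_nat (𝕜 := ℝ)).const_mul (lam * (c₂ + 1))
        simpa using this
    have t2 : Tendsto (fun N => transfer β H (A N) x) ↑U (𝓝 (lam * Φ x)) := by
      have hcomb : Tendsto (fun N => lam * A N x + lam * ((N : ℝ))⁻¹ * (P N x - 1)) ↑U
          (𝓝 (lam * Φ x + 0)) :=
        Tendsto.add ((hΦlim x).const_mul lam) (herr.mono_left hU)
      rw [add_zero] at hcomb
      apply hcomb.congr'
      have hev : {N : ℕ | lam * A N x + lam * ((N : ℝ))⁻¹ * (P N x - 1)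
          = transfer β H (A N) x} ∈ (↑U : Filter ℕ) := by
        apply hU
        rw [mem_atTop_sets]
        exact ⟨1, fun N hN => (hAtrans N hN x).symm⟩
      exact hev
    exact tendsto_nhds_unique t1 t2
  -- modulus of continuity and continuity
  have hmod : ∀ m (x y : Sig), nClose m x y →
      |Φ x - Φ y| ≤ c₂ * (Real.exp (β * tl H m) - 1) := by
    intro m x y hxy
    set w : ℝ := c₂ * (Real.exp (β * tl H m) - 1) with hwdef
    have hw0 : 0 ≤ w := by
      have : (1:ℝ) ≤ Real.exp (β * tl H m) := by
        rw [Real.one_le_exp_iff]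
        exact mul_nonneg hβ.le (tl_nonneg hHc m)
      nlinarith
    have hPest : ∀ n, |P n x - P n y| ≤ w := by
      intro n
      have e1 : ∀ (x' y' : Sig), nClose m x' y' → P n x' - P n y' ≤ w := by
        intro x' y' h'
        have h2 := Tn_ratio_tl hHc hHv hβ.le h' n
        have h3 : P n x' - P n y' ≤ (Real.exp (β * tl H m) - 1) * P n y' := by
          rw [hPdef]
          simp only
          have := mul_le_mul_of_nonneg_left h2 (inv_nonneg.2 (hlampow n).le)
          nlinarith [hlampow n, Tn_pos β H n y']
        have h4 : (Real.exp (β * tl H m) - 1) * P n y' ≤ w := by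
          have h5 := hP2 n y'
          have h6 : (0:ℝ) ≤ Real.exp (β * tl H m) - 1 := by
            have : (1:ℝ) ≤ Real.exp (β * tl H m) := by
              rw [Real.one_le_exp_iff]
              exact mul_nonneg hβ.le (tl_nonneg hHc m)
            linarith
          rw [hwdef]
          nlinarith
        linarith
      rw [abs_sub_le_iff]
      exact ⟨e1 x y hxy, e1 y x (nClose_symm hxy)⟩
    have hAest : ∀ N, 1 ≤ N → |A N x - A N y| ≤ w := by
      intro N hN
      have hNpos : (0:ℝ) < (N : ℝ) := by exact_mod_cast hN
      have h1 : A N x - A N y = ((N : ℝ))⁻¹ * ∑ n ∈ Finset.range N, (P n x - P n y) := by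
        rw [hAdef]
        simp only
        rw [Finset.sum_sub_distrib]
        ring
      rw [h1, abs_mul, abs_of_nonneg (inv_nonneg.2 hNpos.le)]
      have h2 : |∑ n ∈ Finset.range N, (P n x - P n y)| ≤ (N : ℝ) * w := by
        calc |∑ n ∈ Finset.range N, (P n x - P n y)|
            ≤ ∑ n ∈ Finset.range N, |P n x - P n y| := Finset.abs_sum_le_sum_abs _ _
          _ ≤ ∑ _n ∈ Finset.range N, w := Finset.sum_le_sum (fun n _ => hPest n)
          _ = (N : ℝ) * w := by rw [Finset.sum_const, Finset.card_range, nsmul_eq_mul]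
      calc ((N : ℝ))⁻¹ * |∑ n ∈ Finset.range N, (P n x - P n y)|
          ≤ ((N : ℝ))⁻¹ * ((N : ℝ) * w) :=
            mul_le_mul_of_nonneg_left h2 (inv_nonneg.2 hNpos.le)
        _ = w := by field_simp
    have hlimabs : Tendsto (fun N => |A N x - A N y|) ↑U (𝓝 (|Φ x - Φ y|)) :=
      ((hΦlim x).sub (hΦlim y)).abs
    apply le_of_tendsto hlimabs
    apply hU
    rw [mem_atTop_sets]
    exact ⟨1, fun N hN => hAest N hN⟩
  have hΦcont : Continuous Φ := by
    rw [continuous_iff_continuousAt]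
    intro x
    rw [ContinuousAt, Metric.tendsto_nhds]
    intro ε hε
    have homega : Tendsto (fun m => c₂ * (Real.exp (β * tl H m) - 1)) atTop (𝓝 0) := by
      have h1 : Tendsto (fun m => β * tl H m) atTop (𝓝 0) := by
        have := (tl_tendsto (H := H)).const_mul β
        simpa using this
      have h2 : Tendsto (fun m => Real.exp (β * tl H m)) atTop (𝓝 1) := by
        have := (Real.continuous_exp.tendsto 0).comp h1
        simpa [Function.comp_def] using this
      have h3 := ((h2.sub_const 1).const_mul c₂)
      simpa using h3
    obtain ⟨m, hm⟩ := (homega.eventually (gt_mem_nhds hε)).exists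
    have hopen := isOpen_nClose m x
    have hxmem : x ∈ {y : Sig | nClose m x y} := nClose_refl m x
    filter_upwards [hopen.mem_nhds hxmem] with y hy
    have := hmod m x y hy
    rw [Real.dist_eq, abs_sub_comm]
    exact lt_of_le_of_lt this hm
  exact ⟨Φ, hΦcont, hΦpos, heig⟩

end Eigenfunction


section Uniqueness

variable {H : Sig → ℝ} {β : ℝ}

lemma iterate_eigen {lam' : ℝ} {Φ' : Sig → ℝ}
    (heq : transfer β H Φ' = fun x => lam' * Φ' x) :
    ∀ n, (transfer β H)^[n] Φ' = fun x => lam' ^ n * Φ' x := by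
  intro n
  induction n with
  | zero => funext x; simp
  | succ n ih =>
    rw [Function.iterate_succ_apply', ih]
    funext x
    rw [transfer_smul, congrFun heq x]
    ring

lemma iterate_bounds {Φ' : Sig → ℝ} {mv Mv : ℝ}
    (hm : ∀ x, mv ≤ Φ' x) (hM : ∀ x, Φ' x ≤ Mv) :
    ∀ n x, mv * Tn β H n x ≤ (transfer β H)^[n] Φ' x
      ∧ (transfer β H)^[n] Φ' x ≤ Mv * Tn β H n x := by
  intro n
  induction n with
  | zero =>
    intro x
    constructor
    · have := hm x; rw [Tn_zero]; simpa using this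
    · have := hM x; rw [Tn_zero]; simpa using this
  | succ n ih =>
    intro x
    rw [Function.iterate_succ_apply', Tn_succ]
    constructor
    · calc mv * transfer β H (Tn β H n) x
          = transfer β H (fun y => mv * Tn β H n y) x := (transfer_smul β H _ _ _).symm
        _ ≤ transfer β H ((transfer β H)^[n] Φ') x :=
            transfer_mono β H (fun y => (ih y).1) x
    · calc transfer β H ((transfer β H)^[n] Φ') x
          ≤ transfer β H (fun y => Mv * Tn β H n y) x :=
            transfer_mono β H (fun y => (ih y).2) x
        _ = Mv * transfer β H (Tn β H n) x := transfer_smul β H _ _ _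

lemma lam_eq {lam lam' : ℝ} (hlam : 0 < lam) (hlam' : 0 < lam')
    {c₁ c₂ : ℝ} (hc₁ : 0 < c₁)
    (hlow : ∀ n x, c₁ * lam ^ n ≤ Tn β H n x)
    (hupp : ∀ n x, Tn β H n x ≤ c₂ * lam ^ n)
    {Φ' : Sig → ℝ} (hΦc : Continuous Φ') (hΦp : ∀ x, 0 < Φ' x)
    (heq : transfer β H Φ' = fun x => lam' * Φ' x) : lam' = lam := by
  obtain ⟨xM, hxM⟩ := exists_max Φ' hΦc
  obtain ⟨xm, hxm⟩ := exists_min Φ' hΦc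
  have hmv : 0 < Φ' xm := hΦp xm
  have hMv : 0 < Φ' xM := hΦp xM
  have hit := iterate_eigen heq
  have hb := iterate_bounds (fun x => hxm x) (fun x => hxM x) (β := β) (H := H)
  set x0 : Sig := fun _ => 0 with hx0def
  have hx0 : 0 < Φ' x0 := hΦp x0
  have hc₂ : 0 < c₂ := by
    have := hupp 0 x0
    rw [Tn_zero] at this
    simp at this
    linarith
  set r : ℝ := lam' / lam with hrdef
  have hrpos : 0 < r := div_pos hlam' hlam
  set d1 : ℝ := Φ' xm * c₁ / Φ' x0 with hd1def
  set d2 : ℝ := Φ' xM * c₂ / Φ' x0 with hd2def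
  have hd1pos : 0 < d1 := by positivity
  have hbounds : ∀ n, d1 ≤ r ^ n ∧ r ^ n ≤ d2 := by
    intro n
    have h1 := (hb n x0).1
    have h2 := (hb n x0).2
    rw [congrFun (hit n) x0] at h1 h2
    have h3 : Φ' xm * (c₁ * lam ^ n) ≤ lam' ^ n * Φ' x0 :=
      le_trans (mul_le_mul_of_nonneg_left (hlow n x0) hmv.le) h1
    have h4 : lam' ^ n * Φ' x0 ≤ Φ' xM * (c₂ * lam ^ n) :=
      le_trans h2 (mul_le_mul_of_nonneg_left (hupp n x0) hMv.le)
    have hpn : (0:ℝ) < lam ^ n := pow_pos hlam n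
    have hrn : r ^ n = lam' ^ n / lam ^ n := div_pow lam' lam n
    constructor
    · rw [hrn, hd1def, div_le_div_iff₀ hx0 hpn]
      nlinarith
    · rw [hrn, hd2def, div_le_div_iff₀ hpn hx0]
      nlinarith
  rcases lt_trichotomy lam' lam with h | h | h
  · exfalso
    have hr1 : r < 1 := (div_lt_one hlam).2 h
    have htend := tendsto_pow_atTop_nhds_zero_of_lt_one hrpos.le hr1
    obtain ⟨n, hn⟩ := (htend.eventually (gt_mem_nhds hd1pos)).exists
    have := (hbounds n).1
    linarith
  · exact h
  · exfalso
    have hr1 : 1 < r := (one_lt_div hlam).2 h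
    have htend := tendsto_pow_atTop_atTop_of_one_lt hr1
    obtain ⟨n, hn⟩ := (htend.eventually_ge_atTop (d2 + 1)).exists
    have := (hbounds n).2
    linarith

lemma eigen_prop {lam : ℝ} {Φ Φ' : Sig → ℝ}
    (hΦc : Continuous Φ) (hΦp : ∀ x, 0 < Φ x)
    (hΦe : transfer β H Φ = fun x => lam * Φ x)
    (hΦ'c : Continuous Φ') (hΦ'p : ∀ x, 0 < Φ' x)
    (hΦ'e : transfer β H Φ' = fun x => lam * Φ' x) :
    ∃ s : ℝ, 0 < s ∧ Φ' = fun x => s * Φ x := by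
  obtain ⟨x0, hx0⟩ := exists_min (fun x => Φ' x / Φ x)
    (hΦ'c.div hΦc (fun x => (hΦp x).ne'))
  set s : ℝ := Φ' x0 / Φ x0 with hs
  have hspos : 0 < s := div_pos (hΦ'p x0) (hΦp x0)
  set ψ : Sig → ℝ := fun x => Φ' x - s * Φ x with hψ
  have hψnn : ∀ x, 0 ≤ ψ x := by
    intro x
    have h1 : s ≤ Φ' x / Φ x := hx0 x
    rw [le_div_iff₀ (hΦp x)] at h1
    rw [hψ]
    simp only
    linarith
  have hψ0 : ψ x0 = 0 := by
    rw [hψ]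
    simp only
    rw [hs, div_mul_cancel₀ _ (hΦp x0).ne', sub_self]
  have hψe : ∀ x, transfer β H ψ x = lam * ψ x := by
    intro x
    have e1 : transfer β H ψ x = transfer β H Φ' x - s * transfer β H Φ x := by
      simp only [hψ, transfer_def]
      ring
    rw [e1, congrFun hΦe x, congrFun hΦ'e x, hψ]
    simp only
    ring
  have hstep : ∀ z, ψ z = 0 → ∀ i : Fin 2, ψ (cons2 i z) = 0 := by
    intro z hz i
    have h1 : transfer β H ψ z = 0 := by rw [hψe z, hz, mul_zero]
    rw [transfer_def] at h1
    have h2 : 0 ≤ Real.exp (-β * H (cons2 0 z)) * ψ (cons2 0 z) :=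
      mul_nonneg (Real.exp_pos _).le (hψnn _)
    have h3 : 0 ≤ Real.exp (-β * H (cons2 1 z)) * ψ (cons2 1 z) :=
      mul_nonneg (Real.exp_pos _).le (hψnn _)
    have h4 : Real.exp (-β * H (cons2 i z)) * ψ (cons2 i z) = 0 := by
      fin_cases i
      · show Real.exp (-β * H (cons2 0 z)) * ψ (cons2 0 z) = 0
        linarith
      · show Real.exp (-β * H (cons2 1 z)) * ψ (cons2 1 z) = 0
        linarith
    rcases mul_eq_zero.1 h4 with h5 | h5
    · exact absurd h5 (Real.exp_ne_zero _)
    · exact h5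
  set glue : ℕ → Sig → Sig := fun m y k => if k < m then y k else x0 (k - m) with hglue
  have hglue0 : ∀ y, glue 0 y = x0 := by
    intro y; funext k; simp [hglue]
  have hglue_succ : ∀ m y, glue (m+1) y = cons2 (y 0) (glue m (fun k => y (k+1))) := by
    intro m y
    funext k
    cases k with
    | zero => simp [hglue, cons2]
    | succ k =>
      simp only [hglue, cons2]
      by_cases h : k < m
      · rw [if_pos (by omega : k + 1 < m + 1), if_pos h]
      · rw [if_neg (by omega : ¬ (k + 1 < m + 1)), if_neg h]
        congr 1
        omega
  have hglue_zero : ∀ m y, ψ (glue m y) = 0 := by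
    intro m
    induction m with
    | zero => intro y; rw [hglue0]; exact hψ0
    | succ m ih =>
      intro y
      rw [hglue_succ m y]
      exact hstep _ (ih (fun k => y (k+1))) (y 0)
  have hglue_tendsto : ∀ y, Tendsto (fun m => glue m y) atTop (𝓝 y) := by
    intro y
    rw [tendsto_pi_nhds]
    intro k
    apply Tendsto.congr' _ (tendsto_const_nhds (x := y k))
    filter_upwards [eventually_ge_atTop (k+1)] with m hm
    simp [hglue, show k < m by omega]
  have hψc : Continuous ψ := by
    rw [hψ]
    exact hΦ'c.sub (continuous_const.mul hΦc)
  have hψzero : ∀ y, ψ y = 0 := by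
    intro y
    have h1 : Tendsto (fun m => ψ (glue m y)) atTop (𝓝 (ψ y)) :=
      (hψc.tendsto y).comp (hglue_tendsto y)
    have h2 : (fun m => ψ (glue m y)) = fun _ => 0 := funext (fun m => hglue_zero m y)
    rw [h2] at h1
    exact tendsto_nhds_unique h1 tendsto_const_nhds
  refine ⟨s, hspos, ?_⟩
  funext x
  have h6 := hψzero x
  rw [hψ] at h6
  simp only at h6
  linarith

end Uniqueness

end RPF


/-- existence and uniqueness of the positive continuous eigenfunction of the
transfer operator, for a potential of summable variation. -/
theorem stmt_0 (H : Sig → ℝ) (hHc : Continuous H) (hHv : SummableVar H)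
    (β : ℝ) (hβ : 0 < β) :
    ∃ (lam : ℝ) (Φ : Sig → ℝ), 0 < lam ∧ Continuous Φ ∧ (∀ x, 0 < Φ x) ∧
      IsGreatest (Set.range Φ) 1 ∧ (transfer β H Φ = fun x => lam * Φ x) ∧
      ∀ (lam' : ℝ) (Φ' : Sig → ℝ), 0 < lam' → Continuous Φ' → (∀ x, 0 < Φ' x) →
        (transfer β H Φ' = fun x => lam' * Φ' x) →
        lam' = lam ∧ ∃ s : ℝ, 0 < s ∧ Φ' = fun x => s * Φ x := by
  obtain ⟨lam, hlam, hlow, hupp, Φ0, hΦ0c, hΦ0p, hΦ0e⟩ := RPF.exists_eigen hHc hHv hβ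
  obtain ⟨xs, hxs⟩ := RPF.exists_max Φ0 hΦ0c
  set M : ℝ := Φ0 xs with hM
  have hMpos : 0 < M := hΦ0p xs
  set Φ : Sig → ℝ := fun x => M⁻¹ * Φ0 x with hΦ
  have hΦc : Continuous Φ := continuous_const.mul hΦ0c
  have hΦp : ∀ x, 0 < Φ x := fun x => mul_pos (inv_pos.2 hMpos) (hΦ0p x)
  have hΦe : transfer β H Φ = fun x => lam * Φ x := by
    funext x
    rw [hΦ]
    simp only
    rw [RPF.transfer_smul, congrFun hΦ0e x]
    ring
  have hgr : IsGreatest (Set.range Φ) 1 := by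
    constructor
    · refine ⟨xs, ?_⟩
      rw [hΦ]
      simp only
      field_simp
      exact hM.symm
    · rintro v ⟨y, rfl⟩
      rw [hΦ]
      simp only
      rw [inv_mul_le_iff₀ hMpos, mul_one]
      exact hxs y
  refine ⟨lam, Φ, hlam, hΦc, hΦp, hgr, hΦe, ?_⟩
  intro lam' Φ' hlam' hΦ'c hΦ'p hΦ'e
  have hlameq : lam' = lam :=
    RPF.lam_eq hlam hlam' (Real.exp_pos _) hlow hupp hΦ'c hΦ'p hΦ'e
  subst hlameq
  exact ⟨rfl, RPF.eigen_prop hΦc hΦp hΦe hΦ'c hΦ'p hΦ'e⟩
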